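/- If A(x) is a formal power series over ℚ with A(0) = 0 satisfying A(1-A)^2 = x, then A is the unique such power series, and its coefficients are all positive integers. -/

import Mathlib

open PowerSeries Finset

private def NatRange : Subsemiring ℚ := (Nat.castRingHom ℚ).rangeS

private lemma natRange_nonneg {x : ℚ} (hx : x ∈ NatRange) : 0 ≤ x := by
  obtain ⟨c, rfl⟩ := hx
  simp

private lemma coeff_pow_mem (A : PowerSeries ℚ) (m : ℕ)
    (h : ∀ j ≤ m, coeff j A ∈ NatRange) :
    ∀ k : ℕ, ∀ m' ≤ m, coeff m' (A ^ k) ∈ NatRange := by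
  intro k
  induction k with
  | zero =>
    intro m' _
    rw [pow_zero, coeff_one]
    split
    · exact one_mem _
    · exact zero_mem _
  | succ k ih =>
    intro m' hm'
    rw [pow_succ, coeff_mul]
    refine sum_mem fun p hp => ?_
    have hpa := Finset.HasAntidiagonal.mem_antidiagonal.1 hp
    exact mul_mem (ih p.1 (le_trans (by omega) hm')) (h p.2 (le_trans (by omega) hm'))

private lemma coeff_pow_zero (A : PowerSeries ℚ) (hA0 : constantCoeff A = 0)
    {n k : ℕ} (hk : n < k) : coeff n (A ^ k) = 0 := by
  have hX : (X : PowerSeries ℚ) ∣ A := X_dvd_iff.2 hA0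
  have : (X : PowerSeries ℚ) ^ k ∣ A ^ k := pow_dvd_pow_of_dvd hX k
  exact (X_pow_dvd_iff.1 this) n hk

private lemma geom_aux (A : PowerSeries ℚ) : ∀ N : ℕ,
    (∑ k ∈ range N, ((k : PowerSeries ℚ) + 1) * A ^ k) * (1 - A) ^ 2
      = 1 - ((N : PowerSeries ℚ) + 1) * A ^ N + (N : PowerSeries ℚ) * A ^ (N + 1) := by
  intro N
  induction N with
  | zero => simp
  | succ N ih =>
    rw [Finset.sum_range_succ, add_mul, ih]
    push_cast
    ring

private lemma coeff_rec (A : PowerSeries ℚ) (hA0 : constantCoeff A = 0)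
    (hA : A * (1 - A) ^ 2 = X) (m : ℕ) :
    coeff (m + 1) A = ∑ k ∈ range (m + 1), ((k : ℚ) + 1) * coeff m (A ^ k) := by
  set N := m + 1 with hN
  set S : PowerSeries ℚ := ∑ k ∈ range N, ((k : PowerSeries ℚ) + 1) * A ^ k with hS
  have h2 : X * S = A - ((N : PowerSeries ℚ) + 1) * A ^ (N + 1)
      + (N : PowerSeries ℚ) * A ^ (N + 2) := by
    calc X * S = (A * (1 - A) ^ 2) * S := by rw [hA]
    _ = A * (S * (1 - A) ^ 2) := by ring
    _ = A * (1 - ((N : PowerSeries ℚ) + 1) * A ^ N + (N : PowerSeries ℚ) * A ^ (N + 1)) := by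
        rw [geom_aux A N]
    _ = _ := by ring
  have hcast : ∀ j : ℕ, ((j : PowerSeries ℚ) + 1) = C ((j : ℚ) + 1) := by
    intro j
    simp [map_add, map_natCast, map_one]
  have h3 := congrArg (coeff (m + 1)) h2
  rw [coeff_succ_X_mul] at h3
  rw [hcast N, show ((N : PowerSeries ℚ)) = C (N : ℚ) from (map_natCast (C : ℚ →+* PowerSeries ℚ) N).symm] at h3
  rw [map_add, map_sub, coeff_C_mul, coeff_C_mul,
    coeff_pow_zero A hA0 (by omega : m + 1 < N + 1),
    coeff_pow_zero A hA0 (by omega : m + 1 < N + 2)] at h3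
  simp only [mul_zero, sub_zero, add_zero] at h3
  rw [← h3, hS, map_sum]
  refine Finset.sum_congr rfl fun k _ => ?_
  rw [hcast k, coeff_C_mul]

theorem A_unique_and_positive_integral
    (A : PowerSeries ℚ) (hA0 : constantCoeff A = 0)
    (hA : A * (1 - A) ^ 2 = X) :
    (∀ A' : PowerSeries ℚ, constantCoeff A' = 0 → A' * (1 - A') ^ 2 = X → A' = A) ∧
    (∀ n : ℕ, 1 ≤ n → ∃ m : ℕ, 0 < m ∧ coeff n A = (m : ℚ)) := by
  constructor
  · -- uniqueness
    intro A' hA0' hA'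
    have hfac : (A' - A) * (1 - 2 * (A' + A) + (A' ^ 2 + A' * A + A ^ 2))
        = A' * (1 - A') ^ 2 - A * (1 - A) ^ 2 := by ring
    rw [hA', hA, sub_self] at hfac
    rcases mul_eq_zero.1 hfac with h | h
    · exact sub_eq_zero.1 h
    · exfalso
      have := congrArg constantCoeff h
      simp [hA0, hA0'] at this
  · -- positivity and integrality
    have key : ∀ n : ℕ, coeff n A ∈ NatRange ∧ (1 ≤ n → 0 < coeff n A) := by
      intro n
      induction n using Nat.strong_induction_on with
      | _ n ih =>
        match n with
        | 0 =>
          refine ⟨?_, by omega⟩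
          rw [coeff_zero_eq_constantCoeff, hA0]
          exact zero_mem _
        | m + 1 =>
          have hrec := coeff_rec A hA0 hA m
          have hmem : ∀ k : ℕ, ∀ m' ≤ m, coeff m' (A ^ k) ∈ NatRange :=
            coeff_pow_mem A m (fun j hj => (ih j (by omega)).1)
          constructor
          · rw [hrec]
            refine sum_mem fun k _ => mul_mem ?_ (hmem k m le_rfl)
            have : ((k : ℚ) + 1) = ((k + 1 : ℕ) : ℚ) := by push_cast; ring
            rw [this]
            exact ⟨k + 1, rfl⟩
          · intro _
            rw [hrec]
            apply Finset.sum_pos'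
            · intro k _
              have h1 : (0 : ℚ) ≤ (k : ℚ) + 1 := by positivity
              have h2 : (0 : ℚ) ≤ coeff m (A ^ k) := natRange_nonneg (hmem k m le_rfl)
              positivity
            · rcases Nat.eq_zero_or_pos m with rfl | hm
              · refine ⟨0, by simp, ?_⟩
                simp
              · refine ⟨1, Finset.mem_range.2 (by omega), ?_⟩
                have hpos : 0 < coeff m A := (ih m (by omega)).2 hm
                have : coeff m (A ^ 1) = coeff m A := by rw [pow_one]
                rw [this]
                positivity
    intro n hn
    obtain ⟨⟨c, hc⟩, hpos⟩ := key n
    have hc' : (c : ℚ) = coeff n A := by simpa using hc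
    refine ⟨c, ?_, hc'.symm⟩
    have : (0 : ℚ) < c := by rw [hc']; exact hpos hn
    exact_mod_cast this
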